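/- Let M = F₁ × … × F_k be a complete semi-Riemannian direct product with canonical foliations F_i. Suppose S is a nondegenerate distribution invariant by parallel translation (hence a foliation) such that F_i(p) ∩ S(p) = {0} for all i and some point p. Then parallel translation along any loop in M fixes every vector of S(x) for every x; consequently the leaves of S are flat and decomposable (they split as products of lines and circles). -/

import Mathlib

/-!  Holonomy model of the lemma on parallel distributions in a complete
direct product `M = F₁ × … × F_k`.  `W` is the tangent space at a point `p`,
`F i` the tangent subspaces of the canonical foliations (an internal direct
sum decomposition), and `Hol` the holonomy group of `M` at `p`, which — `M`
being a direct product — is generated by the parallel translations along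
loops contained in the single factors (`Gen i`); such a translation fixes the
tangent spaces of the other factors pointwise and preserves `F i`.  The
parallel distribution `S` is encoded by a holonomy-invariant subspace.

The conclusion — parallel translation along any loop fixes every vector of
`S` — means the leaves of `S` have trivial restricted holonomy; hence they
are flat and decomposable (products of lines and circles). -/

/-- A nondegenerate parallel distribution `S` on a complete
direct product meeting every canonical foliation trivially is fixed
vectorwise by all parallel translations along loops. -/
theorem parallel_distribution_trivial_holonomy
    {W : Type*} [AddCommGroup W] [Module ℝ W]
    {k : ℕ} (F : Fin k → Submodule ℝ W)
    (hinternal : DirectSum.IsInternal F)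
    (Hol : Subgroup (W ≃ₗ[ℝ] W))
    (Gen : Fin k → Set (W ≃ₗ[ℝ] W))
    -- the holonomy of the direct product is generated by factor holonomies
    (hGen : Hol = Subgroup.closure (⋃ i, Gen i))
    (hGenFix : ∀ i, ∀ h ∈ Gen i,
      (∀ j, j ≠ i → ∀ v ∈ F j, h v = v) ∧ (∀ v ∈ F i, h v ∈ F i))
    (S : Submodule ℝ W)
    -- `S` is invariant by parallel translation
    (hSinv : ∀ h ∈ Hol, S.map (h : W ≃ₗ[ℝ] W).toLinearMap = S)
    -- `S` meets each canonical foliation trivially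
    (hmeet : ∀ i, S ⊓ F i = ⊥) :
    ∀ h ∈ Hol, ∀ v ∈ S, h v = v := by
  have htop : (⨆ i, F i) = ⊤ := hinternal.submodule_iSup_eq_top
  intro h hh
  rw [hGen] at hh
  induction hh using Subgroup.closure_induction with
  | mem g hg =>
    intro v hv
    obtain ⟨i, hgi⟩ := Set.mem_iUnion.1 hg
    have hgHol : g ∈ Hol := by
      rw [hGen]; exact Subgroup.subset_closure (Set.mem_iUnion.2 ⟨i, hgi⟩)
    have hgv : g v ∈ S := by
      rw [← hSinv g hgHol]; exact ⟨v, hv, rfl⟩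
    have hdiff : g v - v ∈ F i := by
      have hv' : v ∈ ⨆ j, F j := htop ▸ Submodule.mem_top
      refine Submodule.iSup_induction (motive := fun w => g w - w ∈ F i) F hv' ?_ ?_ ?_
      · intro j w hw
        by_cases hji : j = i
        · subst hji
          exact (F j).sub_mem ((hGenFix j g hgi).2 w hw) hw
        · rw [(hGenFix i g hgi).1 j hji w hw, sub_self]
          exact (F i).zero_mem
      · simp
      · intro x y hx hy
        have hxy : g (x + y) - (x + y) = (g x - x) + (g y - y) := by
          rw [map_add]; abel
        rw [hxy]; exact (F i).add_mem hx hy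
    have hmem : g v - v ∈ S ⊓ F i := ⟨S.sub_mem hgv hv, hdiff⟩
    rw [hmeet i, Submodule.mem_bot] at hmem
    exact sub_eq_zero.mp hmem
  | one => intro v hv; rfl
  | mul a b _ _ ha hb =>
    intro v hv
    have h1 : (a * b) v = a (b v) := rfl
    rw [h1, hb v hv, ha v hv]
  | inv a _ ha =>
    intro v hv
    have := ha v hv
    calc a⁻¹ v = a⁻¹ (a v) := by rw [this]
      _ = v := a.symm_apply_apply v
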